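/- Let n ≥ 2, s ≥ 2, and let G(J(P_n)) = {u_1,…,u_r}. Then the following are equivalent for any indices i_1,…,i_s: (1) u_{i_1}⋯u_{i_s} ∈ G(J(P_n)^s); (2) u_p u_q ∈ G(J(P_n)^2) for all p, q ∈ {i_1,…,i_s}. -/

import Mathlib

open MvPolynomial

noncomputable section

/-- The cover ideal of the path graph `P_n` on vertices `x_1, …, x_n`:
the intersection of the ideals `(x_i, x_{i+1})` over the edges of the path. -/
def pathCoverIdeal (k : Type*) [Field k] (n : ℕ) : Ideal (MvPolynomial ℕ k) :=
  ⨅ i ∈ Finset.Icc 1 (n - 1), Ideal.span {(X i : MvPolynomial ℕ k), X (i + 1)}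

/-- A monomial with coefficient `1`. -/
def IsMonomial {k : Type*} [Field k] (m : MvPolynomial ℕ k) : Prop :=
  ∃ a : ℕ →₀ ℕ, m = monomial a 1

/-- The minimal monomial generating set `G(I)` of a monomial ideal `I`:
monomials of `I` that are not strictly divisible by another monomial of `I`. -/
def minGens {k : Type*} [Field k] (I : Ideal (MvPolynomial ℕ k)) :
    Set (MvPolynomial ℕ k) :=
  {m | IsMonomial m ∧ m ∈ I ∧ ∀ m', IsMonomial m' → m' ∈ I → m' ∣ m → m' = m}

/-- The rooted list `R(P_n)` of the path `P_n`. -/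
def rootedList (k : Type*) [Field k] : ℕ → List (MvPolynomial ℕ k)
  | 0 => [1]
  | 1 => [1]
  | 2 => [X 1, X 2]
  | 3 => [X 2, X 1 * X 3]
  | (n + 4) =>
      ((rootedList k (n + 2)).map fun u => X (n + 3) * u) ++
      ((rootedList k (n + 1)).map fun u => X (n + 4) * X (n + 2) * u)

/-- `F(I^s)`: the set of `s`-fold products of minimal generators of `I`. -/
def sFold {k : Type*} [Field k] (I : Ideal (MvPolynomial ℕ k)) (s : ℕ) :
    Set (MvPolynomial ℕ k) :=
  {m | ∃ L : List (MvPolynomial ℕ k), L.length = s ∧ (∀ u ∈ L, u ∈ minGens I) ∧ m = L.prod}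

/-- `a >_lex b`: the first entry where `a` and `b` differ is bigger in `a`. -/
def lexGt (a b : ℕ → ℕ) : Prop :=
  ∃ t, (∀ j, j < t → a j = b j) ∧ b t < a t

/-- `a` is an exponent-vector expression of `M` as an `s`-fold product of the terms of
the list `L`. -/
def IsExprOn {k : Type*} [Field k] (L : List (MvPolynomial ℕ k)) (s : ℕ) (a : ℕ → ℕ)
    (M : MvPolynomial ℕ k) : Prop :=
  (∀ i, L.length ≤ i → a i = 0) ∧ (∑ i ∈ Finset.range L.length, a i) = s ∧
    M = ∏ i ∈ Finset.range L.length, (L.getD i 1) ^ (a i)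

/-- `a` is the (lexicographically) maximal expression of `M` as an `s`-fold product of
the terms of the list `L`. -/
def IsMaxExpr {k : Type*} [Field k] (L : List (MvPolynomial ℕ k)) (s : ℕ) (a : ℕ → ℕ)
    (M : MvPolynomial ℕ k) : Prop :=
  IsExprOn L s a M ∧ ∀ b, IsExprOn L s b M → b ≠ a → lexGt a b

/-- The rooted order `M >_R N` on `s`-fold products, relative to the list `L` of
minimal generators: maximal expressions are compared lexicographically. -/
def rootedGt {k : Type*} [Field k] (L : List (MvPolynomial ℕ k)) (s : ℕ)
    (M N : MvPolynomial ℕ k) : Prop :=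
  ∃ a b, IsMaxExpr L s a M ∧ IsMaxExpr L s b N ∧ lexGt a b

/-- An ideal is generated by a subset of the variables. -/
def genByVars {k : Type*} [Field k] (I : Ideal (MvPolynomial ℕ k)) : Prop :=
  ∃ T : Set ℕ, I = Ideal.span ((fun i => (X i : MvPolynomial ℕ k)) '' T)

end
section AuxProof

open Finset

variable {k : Type*} [Field k]

private lemma prod_monomial_one {ι : Type*} (s : Finset ι) (f : ι → (ℕ →₀ ℕ)) :
    (∏ t ∈ s, (monomial (f t) (1 : k))) = monomial (∑ t ∈ s, f t) 1 := by
  induction s using Finset.cons_induction with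
  | empty => simp
  | cons a s ha ih => rw [Finset.prod_cons, Finset.sum_cons, ih, monomial_mul, one_mul]

private lemma monomial_mem_span_pair {a : ℕ →₀ ℕ} {i : ℕ} :
    (monomial a 1 : MvPolynomial ℕ k) ∈ Ideal.span {(X i : MvPolynomial ℕ k), X (i + 1)} ↔
      1 ≤ a i ∨ 1 ≤ a (i + 1) := by
  have h : ({(X i : MvPolynomial ℕ k), X (i + 1)} : Set (MvPolynomial ℕ k)) =
      (fun b => monomial b (1 : k)) '' {Finsupp.single i 1, Finsupp.single (i + 1) 1} := by
    rw [Set.image_insert_eq, Set.image_singleton]; rfl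
  rw [h, mem_ideal_span_monomial_image]
  classical
  simp [support_monomial, Finsupp.single_le_iff]

private lemma monomial_mem_pathCoverIdeal {n : ℕ} {a : ℕ →₀ ℕ} :
    (monomial a 1 : MvPolynomial ℕ k) ∈ pathCoverIdeal k n ↔
      ∀ i ∈ Finset.Icc 1 (n - 1), 1 ≤ a i + a (i + 1) := by
  rw [pathCoverIdeal]
  simp only [Submodule.mem_iInf, monomial_mem_span_pair]
  exact forall₂_congr fun i _ => by omega


private noncomputable def covK (k : Type*) [Field k] (i s : ℕ) : Ideal (MvPolynomial ℕ k) :=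
  Ideal.span ((fun b => monomial b (1 : k)) '' {b : ℕ →₀ ℕ | s ≤ b i + b (i + 1)})

private lemma covK_mul_le (i p q : ℕ) : covK k i p * covK k i q ≤ covK k i (p + q) := by
  rw [covK, covK, Ideal.span_mul_span']
  refine Ideal.span_le.2 ?_
  rintro z hz
  rw [Set.mem_mul] at hz
  obtain ⟨x, hx, y, hy, rfl⟩ := hz
  obtain ⟨b, hb, rfl⟩ := hx
  obtain ⟨b', hb', rfl⟩ := hy
  refine Ideal.subset_span ⟨b + b', ?_, by rw [monomial_mul, one_mul]⟩
  simp only [Set.mem_setOf_eq, Finsupp.add_apply] at *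
  omega

private lemma span_pair_le_covK (i : ℕ) :
    Ideal.span {(X i : MvPolynomial ℕ k), X (i + 1)} ≤ covK k i 1 := by
  refine Ideal.span_le.2 ?_
  rintro z (rfl | rfl)
  · exact Ideal.subset_span ⟨Finsupp.single i 1, by simp, rfl⟩
  · refine Ideal.subset_span ⟨Finsupp.single (i + 1) 1, ?_, rfl⟩
    simp [Finsupp.single_apply]

private lemma pow_le_covK (i s : ℕ) :
    (Ideal.span {(X i : MvPolynomial ℕ k), X (i + 1)}) ^ s ≤ covK k i s := by
  induction s with
  | zero =>
    have h1 : (1 : MvPolynomial ℕ k) ∈ covK k i 0 :=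
      Ideal.subset_span ⟨0, by simp, by simp⟩
    rw [pow_zero, Ideal.one_eq_top]
    exact top_le_iff.2 ((Ideal.eq_top_iff_one _).2 h1)
  | succ s ih =>
    rw [pow_succ]
    exact le_trans (Ideal.mul_mono ih (span_pair_le_covK i)) (covK_mul_le i s 1)


private noncomputable def parityCov (s : ℕ) (a : ℕ →₀ ℕ) : ℕ →₀ ℕ :=
  Finsupp.onFinset a.support
    (fun v => if 1 ≤ a v ∧ ((v % 2 = 1 ∧ s + 1 ≤ 2 * a v) ∨ (v % 2 = 0 ∧ s ≤ 2 * a v))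
      then 1 else 0)
    fun v hv => by
      rw [Finsupp.mem_support_iff]
      have hv' : (if 1 ≤ a v ∧ ((v % 2 = 1 ∧ s + 1 ≤ 2 * a v) ∨ (v % 2 = 0 ∧ s ≤ 2 * a v))
          then 1 else 0) ≠ 0 := hv
      split_ifs at hv' with h
      · omega
      · omega

private lemma parityCov_apply (s : ℕ) (a : ℕ →₀ ℕ) (v : ℕ) :
    parityCov s a v =
      if 1 ≤ a v ∧ ((v % 2 = 1 ∧ s + 1 ≤ 2 * a v) ∨ (v % 2 = 0 ∧ s ≤ 2 * a v))
      then 1 else 0 := rfl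

private lemma parityCov_le (s : ℕ) (a : ℕ →₀ ℕ) : parityCov s a ≤ a := by
  rw [Finsupp.le_def]
  intro v
  rw [parityCov_apply]
  split_ifs with h
  · omega
  · omega

private lemma parityCov_cover {s : ℕ} {a : ℕ →₀ ℕ} {i : ℕ}
    (h : s + 1 ≤ a i + a (i + 1)) :
    1 ≤ parityCov (s + 1) a i + parityCov (s + 1) a (i + 1) := by
  rw [parityCov_apply, parityCov_apply]
  split_ifs with h1 h2 h2
  · omega
  · omega
  · omega
  · omega

private lemma parityCov_residual {s : ℕ} {a : ℕ →₀ ℕ} {i : ℕ}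
    (h : s + 1 ≤ a i + a (i + 1)) :
    s ≤ (a - parityCov (s + 1) a) i + (a - parityCov (s + 1) a) (i + 1) := by
  rw [Finsupp.tsub_apply, Finsupp.tsub_apply, parityCov_apply, parityCov_apply]
  split_ifs with h1 h2 h2
  · omega
  · omega
  · omega
  · omega

private lemma monomial_mem_pow_iff {n s : ℕ} {a : ℕ →₀ ℕ} :
    (monomial a 1 : MvPolynomial ℕ k) ∈ (pathCoverIdeal k n) ^ s ↔
      ∀ i ∈ Finset.Icc 1 (n - 1), s ≤ a i + a (i + 1) := by
  constructor
  · intro h i hi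
    have h2 : (pathCoverIdeal k n) ^ s ≤ covK k i s := by
      refine le_trans (Ideal.pow_right_mono ?_ s) (pow_le_covK i s)
      exact iInf₂_le i hi
    have h3 := h2 h
    rw [covK, mem_ideal_span_monomial_image] at h3
    classical
    obtain ⟨b, hb, hba⟩ := h3 a (by simp [support_monomial])
    have h4 : b i ≤ a i := hba i
    have h5 : b (i + 1) ≤ a (i + 1) := hba (i + 1)
    simp only [Set.mem_setOf_eq] at hb
    omega
  · induction s generalizing a with
    | zero => simp
    | succ s ih =>
      intro h
      have hle : parityCov (s + 1) a ≤ a := parityCov_le _ _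
      have key : monomial a (1 : k) =
          monomial (parityCov (s + 1) a) 1 * monomial (a - parityCov (s + 1) a) 1 := by
        rw [monomial_mul, one_mul, add_tsub_cancel_of_le hle]
      rw [key, pow_succ']
      refine Ideal.mul_mem_mul ?_ (ih fun i hi => parityCov_residual (h i hi))
      exact monomial_mem_pathCoverIdeal.2 fun i hi => parityCov_cover (h i hi)

private lemma monomial_mem_minGens_pow_iff {n s : ℕ} (_hs : 1 ≤ s) {a : ℕ →₀ ℕ} :
    (monomial a 1 : MvPolynomial ℕ k) ∈ minGens ((pathCoverIdeal k n) ^ s) ↔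
      (∀ i ∈ Finset.Icc 1 (n - 1), s ≤ a i + a (i + 1)) ∧
        ∀ v, 1 ≤ a v →
          ∃ i ∈ Finset.Icc 1 (n - 1), (v = i ∨ v = i + 1) ∧ a i + a (i + 1) = s := by
  constructor
  · rintro ⟨-, hmem, hmin⟩
    have h1 := monomial_mem_pow_iff.1 hmem
    refine ⟨h1, ?_⟩
    intro v hv
    by_contra hc
    push_neg at hc
    set b : ℕ →₀ ℕ := a - Finsupp.single v 1 with hbdef
    have hba : b ≤ a := tsub_le_self
    have hbv : ∀ w, b w = if w = v then a v - 1 else a w := by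
      intro w
      rw [hbdef, Finsupp.tsub_apply, Finsupp.single_apply]
      by_cases hw : w = v
      · simp [hw]
      · simp [hw, Ne.symm hw]
    have hbmem : (monomial b 1 : MvPolynomial ℕ k) ∈ (pathCoverIdeal k n) ^ s := by
      refine monomial_mem_pow_iff.2 fun j hj => ?_
      have h2 := h1 j hj
      have h3 : (v = j ∨ v = j + 1) → a j + a (j + 1) ≠ s := hc j hj
      have hj' : b j = a j ∨ (v = j ∧ b j = a j - 1) := by
        rw [hbv]
        split_ifs with h
        · exact Or.inr ⟨h.symm, by rw [h]⟩
        · exact Or.inl rfl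
      have hj1' : b (j + 1) = a (j + 1) ∨ (v = j + 1 ∧ b (j + 1) = a (j + 1) - 1) := by
        rw [hbv]
        split_ifs with h
        · exact Or.inr ⟨h.symm, by rw [h]⟩
        · exact Or.inl rfl
      omega
    have heq := hmin (monomial b 1) ⟨b, rfl⟩ hbmem
      (monomial_dvd_monomial.2 ⟨Or.inr hba, one_dvd 1⟩)
    have hba2 : b = a := monomial_left_injective (one_ne_zero (α := k)) heq
    have hvv := hbv v
    rw [hba2, if_pos rfl] at hvv
    omega
  · rintro ⟨h1, h2⟩
    refine ⟨⟨a, rfl⟩, monomial_mem_pow_iff.2 h1, ?_⟩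
    rintro m' ⟨b, rfl⟩ hbmem hdvd
    have hba : b ≤ a := by
      rcases (monomial_dvd_monomial.1 hdvd).1 with h | h
      · exact absurd h (one_ne_zero (α := k))
      · exact h
    by_cases hb : b = a
    · rw [hb]
    · exfalso
      have : ∃ v, b v < a v := by
        by_contra hcon
        push_neg at hcon
        exact hb (le_antisymm hba (Finsupp.le_def.2 hcon))
      obtain ⟨v, hv⟩ := this
      obtain ⟨i, hi, hvi, htight⟩ := h2 v (by omega)
      have h3 := monomial_mem_pow_iff.1 hbmem i hi
      have h4 : b i ≤ a i := Finsupp.le_def.1 hba i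
      have h5 : b (i + 1) ≤ a (i + 1) := Finsupp.le_def.1 hba (i + 1)
      rcases hvi with rfl | rfl
      · omega
      · omega

private def GoodVec (n : ℕ) (c : ℕ →₀ ℕ) : Prop :=
  (∀ v, c v ≤ 1) ∧ (∀ v, 1 ≤ c v → 1 ≤ v ∧ v ≤ n) ∧
    (∀ i ∈ Finset.Icc 1 (n - 1), 1 ≤ c i + c (i + 1))

private lemma rootedList_spec (k : Type*) [Field k] :
    ∀ n : ℕ, ∀ u ∈ rootedList k n, ∃ c : ℕ →₀ ℕ, u = monomial c 1 ∧ GoodVec n c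
  | 0 => by
    intro u hu
    rw [rootedList] at hu
    simp only [List.mem_singleton] at hu
    subst hu
    exact ⟨0, by simp, fun v => by simp, fun v hv => by simp at hv, fun i hi => by simp at hi⟩
  | 1 => by
    intro u hu
    rw [rootedList] at hu
    simp only [List.mem_singleton] at hu
    subst hu
    exact ⟨0, by simp, fun v => by simp, fun v hv => by simp at hv, fun i hi => by simp at hi⟩
  | 2 => by
    intro u hu
    rw [rootedList] at hu
    simp only [List.mem_cons, List.mem_singleton, List.not_mem_nil, or_false] at hu
    rcases hu with rfl | rfl
    · refine ⟨Finsupp.single 1 1, rfl, fun v => ?_, fun v hv => ?_, fun i hi => ?_⟩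
      · rw [Finsupp.single_apply]; split_ifs <;> omega
      · rw [Finsupp.single_apply] at hv; split_ifs at hv with h <;> omega
      · simp only [Finset.mem_Icc] at hi
        have : i = 1 := by omega
        subst this
        simp [Finsupp.single_apply]
    · refine ⟨Finsupp.single 2 1, rfl, fun v => ?_, fun v hv => ?_, fun i hi => ?_⟩
      · rw [Finsupp.single_apply]; split_ifs <;> omega
      · rw [Finsupp.single_apply] at hv; split_ifs at hv with h <;> omega
      · simp only [Finset.mem_Icc] at hi
        have : i = 1 := by omega
        subst this
        simp [Finsupp.single_apply]
  | 3 => by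
    intro u hu
    rw [rootedList] at hu
    simp only [List.mem_cons, List.mem_singleton, List.not_mem_nil, or_false] at hu
    rcases hu with rfl | rfl
    · refine ⟨Finsupp.single 2 1, rfl, fun v => ?_, fun v hv => ?_, fun i hi => ?_⟩
      · rw [Finsupp.single_apply]; split_ifs <;> omega
      · rw [Finsupp.single_apply] at hv; split_ifs at hv with h <;> omega
      · simp only [Finset.mem_Icc] at hi
        have hi2 : i = 1 ∨ i = 2 := by omega
        rcases hi2 with rfl | rfl <;> simp [Finsupp.single_apply]
    · refine ⟨Finsupp.single 1 1 + Finsupp.single 3 1, ?_, fun v => ?_, fun v hv => ?_,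
        fun i hi => ?_⟩
      · rw [show (X 1 * X 3 : MvPolynomial ℕ k) =
          monomial (Finsupp.single 1 1) 1 * monomial (Finsupp.single 3 1) 1 from rfl,
          monomial_mul, one_mul]
      · simp only [Finsupp.add_apply, Finsupp.single_apply]; split_ifs <;> omega
      · simp only [Finsupp.add_apply, Finsupp.single_apply] at hv
        split_ifs at hv with h h2 <;> omega
      · simp only [Finset.mem_Icc] at hi
        have hi2 : i = 1 ∨ i = 2 := by omega
        rcases hi2 with rfl | rfl <;> simp [Finsupp.single_apply]
  | (n + 4) => by
    intro u hu
    rw [rootedList] at hu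
    rw [List.mem_append] at hu
    rcases hu with hu | hu
    · rw [List.mem_map] at hu
      obtain ⟨u', hu', rfl⟩ := hu
      obtain ⟨c, rfl, h01, hbd, hcov⟩ := rootedList_spec k (n + 2) u' hu'
      have hc3 : c (n + 3) = 0 := by
        by_contra h
        have := hbd (n + 3) (by omega)
        omega
      refine ⟨Finsupp.single (n + 3) 1 + c, ?_, ?_, ?_, ?_⟩
      · rw [show (X (n + 3) : MvPolynomial ℕ k) = monomial (Finsupp.single (n + 3) 1) 1 from rfl,
          monomial_mul, one_mul]
      · intro v
        rw [Finsupp.add_apply, Finsupp.single_apply]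
        split_ifs with h
        · subst h; omega
        · have := h01 v; omega
      · intro v hv
        rw [Finsupp.add_apply, Finsupp.single_apply] at hv
        split_ifs at hv with h
        · subst h; omega
        · have := hbd v (by omega); omega
      · intro i hi
        simp only [Finset.mem_Icc] at hi
        simp only [Finsupp.add_apply, Finsupp.single_apply]
        rcases show i + 1 ≤ n + 2 ∨ i = n + 2 ∨ i = n + 3 by omega with h | h | h
        · have := hcov i (by simp only [Finset.mem_Icc]; omega)
          split_ifs <;> omega
        · split_ifs <;> omega
        · split_ifs <;> omega
    · rw [List.mem_map] at hu
      obtain ⟨u', hu', rfl⟩ := hu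
      obtain ⟨c, rfl, h01, hbd, hcov⟩ := rootedList_spec k (n + 1) u' hu'
      have hc2 : c (n + 2) = 0 := by
        by_contra h
        have := hbd (n + 2) (by omega)
        omega
      have hc4 : c (n + 4) = 0 := by
        by_contra h
        have := hbd (n + 4) (by omega)
        omega
      refine ⟨Finsupp.single (n + 4) 1 + Finsupp.single (n + 2) 1 + c, ?_, ?_, ?_, ?_⟩
      · rw [show (X (n + 4) * X (n + 2) : MvPolynomial ℕ k) =
          monomial (Finsupp.single (n + 4) 1) 1 * monomial (Finsupp.single (n + 2) 1) 1 from
            rfl,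
          monomial_mul, one_mul, monomial_mul, one_mul]
      · intro v
        simp only [Finsupp.add_apply, Finsupp.single_apply]
        by_cases h4 : n + 4 = v
        · subst h4
          rw [if_pos rfl, if_neg (by omega)]
          omega
        · rw [if_neg h4]
          by_cases h2 : n + 2 = v
          · subst h2
            rw [if_pos rfl]
            omega
          · rw [if_neg h2]
            have := h01 v
            omega
      · intro v hv
        simp only [Finsupp.add_apply, Finsupp.single_apply] at hv
        by_cases h4 : n + 4 = v
        · subst h4; omega
        · rw [if_neg h4] at hv
          by_cases h2 : n + 2 = v
          · subst h2; omega
          · rw [if_neg h2] at hv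
            have := hbd v (by omega)
            omega
      · intro i hi
        simp only [Finset.mem_Icc] at hi
        simp only [Finsupp.add_apply, Finsupp.single_apply]
        rcases show i + 1 ≤ n + 1 ∨ i = n + 1 ∨ i = n + 2 ∨ i = n + 3 by omega with h | h | h | h
        · have := hcov i (by simp only [Finset.mem_Icc]; omega)
          split_ifs <;> omega
        · split_ifs <;> omega
        · split_ifs <;> omega
        · split_ifs <;> omega
end AuxProof

/-- Let `n ≥ 2`, `s ≥ 2`, and let `u_1, …, u_r` be the minimal
generators of `J(P_n)` (enumerated by the rooted list).  For any indices
`i_1, …, i_s`, the product `u_{i_1} ⋯ u_{i_s}` is a minimal generator of `J(P_n)^s` if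
and only if `u_p u_q ∈ G(J(P_n)^2)` for all `p, q ∈ {i_1, …, i_s}`. -/
theorem minimal_sFold_iff_pairs_minimal (k : Type*) [Field k]
    (n s : ℕ) (hn : 2 ≤ n) (hs : 2 ≤ s)
    (i : Fin s → ℕ) (hi : ∀ t, i t < (rootedList k n).length) :
    (∏ t, (rootedList k n).getD (i t) 1) ∈ minGens ((pathCoverIdeal k n) ^ s) ↔
      ∀ p q : Fin s,
        (rootedList k n).getD (i p) 1 * (rootedList k n).getD (i q) 1 ∈
          minGens ((pathCoverIdeal k n) ^ 2) := by
  classical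
  have hmem : ∀ t : Fin s, (rootedList k n).getD (i t) 1 ∈ rootedList k n := fun t => by
    rw [List.getD_eq_getElem _ _ (hi t)]
    exact List.getElem_mem _
  choose c hc hgood using fun t => rootedList_spec k n _ (hmem t)
  have h01 : ∀ t v, c t v ≤ 1 := fun t => (hgood t).1
  have hbd : ∀ t v, 1 ≤ c t v → 1 ≤ v ∧ v ≤ n := fun t => (hgood t).2.1
  have hcov : ∀ t, ∀ j ∈ Finset.Icc 1 (n - 1), 1 ≤ c t j + c t (j + 1) :=
    fun t => (hgood t).2.2
  have hprod : (∏ t, (rootedList k n).getD (i t) 1) = monomial (∑ t, c t) (1 : k) := by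
    rw [Finset.prod_congr rfl fun t _ => hc t, prod_monomial_one]
  have hpair : ∀ p q : Fin s,
      (rootedList k n).getD (i p) 1 * (rootedList k n).getD (i q) 1 =
        monomial (c p + c q) (1 : k) := fun p q => by
    rw [hc p, hc q, monomial_mul, one_mul]
  have key : ∀ p q : Fin s,
      ((rootedList k n).getD (i p) 1 * (rootedList k n).getD (i q) 1 ∈
          minGens ((pathCoverIdeal k n) ^ 2)) ↔
        ((∀ j ∈ Finset.Icc 1 (n - 1), 2 ≤ (c p + c q) j + (c p + c q) (j + 1)) ∧
          ∀ v, 1 ≤ (c p + c q) v →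
            ∃ j ∈ Finset.Icc 1 (n - 1), (v = j ∨ v = j + 1) ∧
              (c p + c q) j + (c p + c q) (j + 1) = 2) := fun p q => by
    rw [hpair p q]
    exact monomial_mem_minGens_pow_iff (by norm_num)
  rw [hprod, monomial_mem_minGens_pow_iff (by omega)]
  simp only [key]
  have hsum : ∀ v, (∑ t, c t) v = ∑ t, c t v := fun v => Finsupp.finset_sum_apply _ _ _
  have hA : ∀ j ∈ Finset.Icc 1 (n - 1), s ≤ (∑ t, c t) j + (∑ t, c t) (j + 1) := by
    intro j hj
    rw [hsum, hsum, ← Finset.sum_add_distrib]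
    calc s = ∑ _t : Fin s, 1 := by simp
      _ ≤ _ := Finset.sum_le_sum fun t _ => hcov t j hj
  have htiff : ∀ j, j ∈ Finset.Icc 1 (n - 1) →
      ((∑ t, c t) j + (∑ t, c t) (j + 1) = s ↔ ∀ t, c t j + c t (j + 1) = 1) := by
    intro j hj
    rw [hsum, hsum, ← Finset.sum_add_distrib]
    constructor
    · intro h t
      by_contra hne
      have hlt : (∑ _t : Fin s, 1) < ∑ t : Fin s, (c t j + c t (j + 1)) :=
        Finset.sum_lt_sum (fun t _ => hcov t j hj)
          ⟨t, Finset.mem_univ t, by have := hcov t j hj; omega⟩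
      simp only [Finset.sum_const, Finset.card_univ, Fintype.card_fin, smul_eq_mul,
        mul_one] at hlt
      omega
    · intro h
      rw [Finset.sum_congr rfl fun t _ => h t]
      simp
  have hpos : ∀ v, (1 ≤ (∑ t, c t) v ↔ ∃ t, 1 ≤ c t v) := by
    intro v
    rw [hsum]
    constructor
    · intro h
      by_contra hc'
      push_neg at hc'
      have hz : ∑ t : Fin s, c t v = 0 :=
        Finset.sum_eq_zero fun t _ => by have := hc' t; omega
      omega
    · rintro ⟨t, ht⟩
      calc 1 ≤ c t v := ht
        _ ≤ _ := Finset.single_le_sum (f := fun t => c t v) (fun _ _ => Nat.zero_le _)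
          (Finset.mem_univ t)
  constructor
  · rintro ⟨-, ht⟩ p q
    constructor
    · intro j hj
      have hjp := hcov p j hj
      have hjq := hcov q j hj
      simp only [Finsupp.add_apply]
      omega
    · intro v hv
      have hv' : 1 ≤ (∑ t, c t) v := by
        rw [Finsupp.add_apply] at hv
        refine (hpos v).2 ?_
        by_cases h : 1 ≤ c p v
        · exact ⟨p, h⟩
        · exact ⟨q, by omega⟩
      obtain ⟨j, hj, hvj, heq⟩ := ht v hv'
      refine ⟨j, hj, hvj, ?_⟩
      have h1 := ((htiff j hj).1 heq) p
      have h2 := ((htiff j hj).1 heq) q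
      simp only [Finsupp.add_apply]
      omega
  · intro hP
    refine ⟨hA, ?_⟩
    intro v hv
    obtain ⟨p, hp⟩ := (hpos v).1 hv
    have hvbd := hbd p v hp
    by_contra hcon
    push_neg at hcon
    have hbad : ∀ j ∈ Finset.Icc 1 (n - 1), (v = j ∨ v = j + 1) →
        ∃ t : Fin s, c t j = 1 ∧ c t (j + 1) = 1 := by
      intro j hj hvj
      have hne := hcon j hj hvj
      have hnall : ¬ ∀ t, c t j + c t (j + 1) = 1 := fun h => hne ((htiff j hj).2 h)
      push_neg at hnall
      obtain ⟨t, ht⟩ := hnall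
      have h1 := hcov t j hj
      have h2 := h01 t j
      have h3 := h01 t (j + 1)
      exact ⟨t, by omega, by omega⟩
    rcases show v = 1 ∨ v = n ∨ (2 ≤ v ∧ v + 1 ≤ n) by omega with rfl | hvn | ⟨hv2, hv3⟩
    · obtain ⟨t, ht1, ht2⟩ := hbad 1 (by simp only [Finset.mem_Icc]; omega) (Or.inl rfl)
      obtain ⟨-, h2'⟩ := hP t t
      obtain ⟨j, hj, hvj, heq⟩ := h2' 1 (by simp only [Finsupp.add_apply]; omega)
      simp only [Finset.mem_Icc] at hj
      have hj1 : j = 1 := by omega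
      subst hj1
      simp only [Finsupp.add_apply] at heq
      omega
    · obtain ⟨t, ht1, ht2⟩ := hbad (n - 1) (by simp only [Finset.mem_Icc]; omega)
        (Or.inr (by omega))
      have hn1 : n - 1 + 1 = n := by omega
      rw [hn1] at ht2
      obtain ⟨-, h2'⟩ := hP t t
      obtain ⟨j, hj, hvj, heq⟩ := h2' n (by simp only [Finsupp.add_apply]; omega)
      simp only [Finset.mem_Icc] at hj
      have hj1 : j = n - 1 := by omega
      subst hj1
      rw [hn1] at heq
      simp only [Finsupp.add_apply] at heq
      omega
    · obtain ⟨t1, h11, h12⟩ := hbad (v - 1) (by simp only [Finset.mem_Icc]; omega)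
        (Or.inr (by omega))
      obtain ⟨t2, h21, h22⟩ := hbad v (by simp only [Finset.mem_Icc]; omega) (Or.inl rfl)
      have hv1 : v - 1 + 1 = v := by omega
      rw [hv1] at h12
      obtain ⟨-, h2'⟩ := hP t1 t2
      obtain ⟨j, hj, hvj, heq⟩ := h2' v (by simp only [Finsupp.add_apply]; omega)
      simp only [Finset.mem_Icc] at hj
      simp only [Finsupp.add_apply] at heq
      rcases show j = v ∨ j = v - 1 by omega with rfl | hj2
      · omega
      · subst hj2
        rw [hv1] at heq
        omega
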